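/- Let p be a prime and r ≥ 0, let T be the discrete p-torus of rank r, and let G be a finite group of automorphisms of T (a finite subgroup of AddAut T). Let ℓ be the p-adic valuation of the order of G. Then either the fixed-point subgroup C_T(G) = {x ∈ T : α(x) = x for all α ∈ G} is infinite, or p^ℓ · x = 0 for every x ∈ C_T(G). -/

import Mathlib

/-- The image of the `p`-adic integers in `ℚ_[p]`, as an additive subgroup. -/
noncomputable def padicIntAddSubgroup (p : ℕ) [Fact p.Prime] : AddSubgroup ℚ_[p] :=
  (PadicInt.Coe.ringHom (p := p)).toAddMonoidHom.range

/-- The Prüfer `p`-group `ℤ(p^∞)`, realized as `ℚ_[p] ⧸ ℤ_[p]`. -/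
abbrev ZpInfty (p : ℕ) [Fact p.Prime] : Type :=
  ℚ_[p] ⧸ padicIntAddSubgroup p

/-- The discrete `p`-torus of rank `r`. -/
abbrev DiscretePTorus (p : ℕ) [Fact p.Prime] (r : ℕ) : Type :=
  Fin r → ZpInfty p

lemma ZpInfty.torsion (p : ℕ) [Fact p.Prime] (z : ZpInfty p) : ∃ n : ℕ, p ^ n • z = 0 := by
  induction z using QuotientAddGroup.induction_on with
  | H q =>
    have hp1 : (1 : ℝ) < p := by exact_mod_cast (Fact.out : p.Prime).one_lt
    obtain ⟨n, hn⟩ : ∃ n : ℕ, ‖q‖ ≤ (p : ℝ) ^ n := by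
      obtain ⟨n, hn⟩ := pow_unbounded_of_one_lt ‖q‖ hp1
      exact ⟨n, hn.le⟩
    refine ⟨n, ?_⟩
    have hmem : ((p : ℚ_[p]) ^ n * q) ∈ padicIntAddSubgroup p := by
      refine ⟨⟨(p : ℚ_[p]) ^ n * q, ?_⟩, rfl⟩
      rw [norm_mul, norm_pow, Padic.norm_p]
      rw [inv_pow]
      rw [inv_mul_le_iff₀ (by positivity)]
      simpa using hn
    have : (p ^ n • QuotientAddGroup.mk q : ZpInfty p) =
        QuotientAddGroup.mk (p ^ n • q) := ((QuotientAddGroup.mk' _).map_nsmul (p ^ n) q).symm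
    rw [this, QuotientAddGroup.eq_zero_iff]
    simpa [nsmul_eq_mul] using hmem

lemma ZpInfty.div (p : ℕ) [Fact p.Prime] (k : ℕ) (hk : k ≠ 0) (z : ZpInfty p) :
    ∃ w : ZpInfty p, k • w = z := by
  induction z using QuotientAddGroup.induction_on with
  | H q =>
    refine ⟨QuotientAddGroup.mk ((k : ℚ_[p])⁻¹ * q), ?_⟩
    have : (k • QuotientAddGroup.mk ((k : ℚ_[p])⁻¹ * q) : ZpInfty p) =
        QuotientAddGroup.mk (k • ((k : ℚ_[p])⁻¹ * q)) :=
      ((QuotientAddGroup.mk' _).map_nsmul k _).symm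
    rw [this]
    congr 1
    rw [nsmul_eq_mul, ← mul_assoc, mul_inv_cancel₀ (by exact_mod_cast hk), one_mul]

/-- Let `T` be the discrete `p`-torus of rank `r` and `G` a finite
group of automorphisms of `T`, with `ℓ = v_p(|G|)`.  Then either the fixed-point set
`C_T(G)` is infinite, or every element of `C_T(G)` is killed by `p^ℓ`. -/
theorem fixedPoints_infinite_or_bounded_exponent
    (p : ℕ) [Fact p.Prime] (r : ℕ)
    (G : AddSubgroup (AddAut (DiscretePTorus p r))) (hG : Finite G) :
    ({x : DiscretePTorus p r | ∀ α ∈ G, α x = x}).Infinite ∨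
    ∀ x : DiscretePTorus p r, (∀ α ∈ G, α x = x) →
      p ^ ((Nat.card G).factorization p) • x = 0 := by
  classical
  have hp : p.Prime := Fact.out
  set T := DiscretePTorus p r
  -- torsion and divisibility for T
  have Ttor : ∀ t : T, ∃ n : ℕ, p ^ n • t = 0 := by
    intro t
    choose f hf using fun i => ZpInfty.torsion p (t i)
    refine ⟨Finset.univ.sup f, ?_⟩
    funext i
    have h1 : p ^ Finset.univ.sup f • t i = p ^ (Finset.univ.sup f - f i) • (p ^ f i • t i) := by
      rw [← mul_smul, ← pow_add, Nat.sub_add_cancel (Finset.le_sup (Finset.mem_univ i))]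
    show p ^ Finset.univ.sup f • t i = (0 : ZpInfty p)
    rw [h1, hf i, smul_zero]
  have Tdiv : ∀ (k : ℕ), k ≠ 0 → ∀ t : T, ∃ y : T, k • y = t := by
    intro k hk t
    choose y hy using fun i => ZpInfty.div p k hk (t i)
    exact ⟨y, funext fun i => hy i⟩
  -- the fixed subgroup
  set C : AddSubgroup T :=
    { carrier := {x : T | ∀ α ∈ G, α x = x}
      zero_mem' := fun α _ => α.map_zero
      add_mem' := fun {a b} ha hb α hα => by rw [map_add, ha α hα, hb α hα]
      neg_mem' := fun {a} ha α hα => by rw [map_neg, ha α hα] } with hC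
  by_cases hfin : ({x : DiscretePTorus p r | ∀ α ∈ G, α x = x}).Infinite
  · exact Or.inl hfin
  right
  intro x hx
  by_contra hxne
  have := Fintype.ofFinite G
  set N := Nat.card G with hN
  have hN0 : N ≠ 0 := Nat.card_pos.ne'
  set ℓ := N.factorization p
  set m := N / p ^ ℓ with hm
  have hNsplit : p ^ ℓ * m = N := Nat.ordProj_mul_ordCompl_eq_self N p
  have hpm : ¬ p ∣ m := Nat.not_dvd_ordCompl hp hN0
  -- N • x ≠ 0
  have hNx : N • x ≠ 0 := by
    intro h
    obtain ⟨n, hn⟩ := Ttor (p ^ ℓ • x)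
    have hm0 : m • (p ^ ℓ • x) = 0 := by
      rw [← mul_smul, mul_comm, hNsplit]
      exact h
    have hcop : Nat.Coprime m (p ^ n) :=
      ((hp.coprime_iff_not_dvd.mpr hpm).symm).pow_right n
    have hdvd : addOrderOf (p ^ ℓ • x) ∣ Nat.gcd m (p ^ n) :=
      Nat.dvd_gcd (addOrderOf_dvd_iff_nsmul_eq_zero.mpr hm0)
        (addOrderOf_dvd_iff_nsmul_eq_zero.mpr hn)
    rw [hcop] at hdvd
    exact hxne (AddMonoid.addOrderOf_eq_one_iff.mp (Nat.dvd_one.mp hdvd))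
  -- the averaging map
  let σ : T → T := fun t => ∑ α : G, (α : AddAut T) t
  have hσmem : ∀ t : T, σ t ∈ C := by
    intro t β hβ
    have : (β : AddAut T) (σ t) = ∑ α : G, ((⟨β, hβ⟩ + α : G) : AddAut T) t := by
      rw [map_sum]
      rfl
    rw [this]
    exact Fintype.sum_bijective (fun α => (⟨β, hβ⟩ : G) + α)
      (AddGroup.addLeft_bijective _) _ _ (fun α => rfl)
  have hσsmul : ∀ (k : ℕ) (t : T), σ (k • t) = k • σ t := by
    intro k t
    simp only [σ, map_nsmul, Finset.smul_sum]
  have hσfix : σ x = N • x := by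
    have : σ x = ∑ _α : G, x := Finset.sum_congr rfl fun α _ => hx α α.2
    rw [this, Finset.sum_const, Finset.card_univ, hN, Nat.card_eq_fintype_card]
  -- finite fixed set as a group
  have hCfin : Finite C := by
    rw [Set.not_infinite] at hfin
    exact (Set.Finite.subset hfin (fun y hy => hy)).to_subtype
  have := Fintype.ofFinite C
  set k := Nat.card C with hk
  have hk0 : k ≠ 0 := Nat.card_pos.ne'
  obtain ⟨y, hy⟩ := Tdiv k hk0 x
  have hkσ : k • σ y = N • x := by rw [← hσsmul, hy, hσfix]
  have hzero : k • σ y = 0 := by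
    have h1 : k • (⟨σ y, hσmem y⟩ : C) = 0 := card_nsmul_eq_zero'
    calc k • σ y = ((k • (⟨σ y, hσmem y⟩ : C) : C) : T) := rfl
      _ = 0 := by rw [h1]; rfl
  exact hNx (by rw [← hkσ, hzero])
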